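/- For K ∈ (1,2) and t > 0, the integral ∫₀^∞ (1-e^(-rt))² r^(-(1+K)) dr converges and equals (Γ(2-K)/(K(K-1)))·(2^K - 2)·t^K. -/

import Mathlib

open Real MeasureTheory

open Set Filter in
private theorem stmt_12_aux (K t : ℝ) (hK1 : 1 < K) (hK2 : K < 2) (ht : 0 < t) :
    IntegrableOn (fun r : ℝ => (1 - Real.exp (-(r * t))) ^ 2 * r ^ (-(1 + K))) (Ioi 0) volume := by
  have hcont : ∀ s : Set ℝ, s ⊆ Ioi 0 → MeasurableSet s →
      AEStronglyMeasurable (fun r : ℝ => (1 - Real.exp (-(r * t))) ^ 2 * r ^ (-(1 + K)))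
        (volume.restrict s) := by
    intro s hs hms
    apply ContinuousOn.aestronglyMeasurable _ hms
    apply ContinuousOn.mul
    · fun_prop
    · intro x hx
      exact (Real.continuousAt_rpow_const x _ (Or.inl (ne_of_gt (hs hx)))).continuousWithinAt
  have h1 : IntegrableOn (fun r : ℝ => (1 - Real.exp (-(r * t))) ^ 2 * r ^ (-(1 + K)))
      (Ioc 0 1) volume := by
    have hmaj : IntegrableOn (fun r : ℝ => t ^ 2 * r ^ (1 - K)) (Ioc 0 1) volume := by
      have : IntervalIntegrable (fun r : ℝ => r ^ (1 - K)) volume 0 1 :=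
        intervalIntegral.intervalIntegrable_rpow' (by linarith)
      rw [intervalIntegrable_iff_integrableOn_Ioc_of_le zero_le_one] at this
      exact this.const_mul _
    refine Integrable.mono hmaj (hcont _ Ioc_subset_Ioi_self measurableSet_Ioc) ?_
    filter_upwards [ae_restrict_mem measurableSet_Ioc] with r hr
    have hr0 : (0:ℝ) < r := hr.1
    have hA : 0 ≤ 1 - Real.exp (-(r * t)) := by
      have : Real.exp (-(r * t)) ≤ 1 := Real.exp_le_one_iff.mpr (by nlinarith)
      linarith
    have hA' : 1 - Real.exp (-(r * t)) ≤ r * t := by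
      nlinarith [Real.add_one_le_exp (-(r * t))]
    have hrp : (0:ℝ) < r ^ (-(1 + K)) := Real.rpow_pos_of_pos hr0 _
    rw [Real.norm_eq_abs, Real.norm_eq_abs, abs_of_nonneg (by positivity),
      abs_of_nonneg (by positivity)]
    have key : (1 - Real.exp (-(r * t))) ^ 2 ≤ (r * t) ^ 2 := by nlinarith
    calc (1 - Real.exp (-(r * t))) ^ 2 * r ^ (-(1 + K))
        ≤ (r * t) ^ 2 * r ^ (-(1 + K)) := by nlinarith
      _ = t ^ 2 * r ^ (1 - K) := by
          rw [show (1:ℝ) - K = 2 + -(1 + K) by ring, Real.rpow_add hr0,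
            show (2:ℝ) = ((2:ℕ):ℝ) by norm_num, Real.rpow_natCast]
          ring
  have h2 : IntegrableOn (fun r : ℝ => (1 - Real.exp (-(r * t))) ^ 2 * r ^ (-(1 + K)))
      (Ioi 1) volume := by
    have hmaj : IntegrableOn (fun r : ℝ => r ^ (-(1 + K))) (Ioi 1) volume :=
      integrableOn_Ioi_rpow_of_lt (by linarith) one_pos
    refine Integrable.mono hmaj (hcont _ (fun x hx => Set.mem_Ioi.mpr (lt_trans one_pos (Set.mem_Ioi.mp hx))) measurableSet_Ioi) ?_
    filter_upwards [ae_restrict_mem measurableSet_Ioi] with r hr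
    have hr0 : (0:ℝ) < r := lt_trans one_pos hr
    have hrp : (0:ℝ) < r ^ (-(1 + K)) := Real.rpow_pos_of_pos hr0 _
    have hA : 0 ≤ 1 - Real.exp (-(r * t)) := by
      have : Real.exp (-(r * t)) ≤ 1 := Real.exp_le_one_iff.mpr (by nlinarith)
      linarith
    have hA2 : 1 - Real.exp (-(r * t)) ≤ 1 := by
      have := Real.exp_pos (-(r * t)); linarith
    rw [Real.norm_eq_abs, Real.norm_eq_abs, abs_of_nonneg (by positivity), abs_of_nonneg hrp.le]
    have hsq : (1 - Real.exp (-(r * t))) ^ 2 ≤ 1 := by nlinarith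
    calc (1 - Real.exp (-(r * t))) ^ 2 * r ^ (-(1 + K))
        ≤ 1 * r ^ (-(1 + K)) := mul_le_mul_of_nonneg_right hsq hrp.le
      _ = r ^ (-(1 + K)) := one_mul _
  have := h1.union h2
  rwa [Ioc_union_Ioi_eq_Ioi zero_le_one] at this

open Set Filter in
private theorem stmt_12_main (K : ℝ) (hK1 : 1 < K) (hK2 : K < 2) (t : ℝ) (ht : 0 < t) :
    IntegrableOn (fun r : ℝ => (1 - Real.exp (-(r * t))) ^ 2 * r ^ (-(1 + K)))
      (Set.Ioi 0) volume ∧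
    ∫ r in Set.Ioi (0:ℝ), (1 - Real.exp (-(r * t))) ^ 2 * r ^ (-(1 + K))
      = (Real.Gamma (2 - K) / (K * (K - 1))) * ((2:ℝ) ^ K - 2) * t ^ K := by
  -- abbreviations
  set ff : ℝ → ℝ := fun r => (1 - Real.exp (-(r * t))) ^ 2 * r ^ (-(1 + K)) with hff
  set hh : ℝ → ℝ := fun r => (2 * t ^ 2 / (K * (K - 1))) *
    (2 * (r ^ (2 - K - 1) * Real.exp (-((2 * t) * r))) - r ^ (2 - K - 1) * Real.exp (-(t * r)))
    with hhh
  set GG : ℝ → ℝ := fun r =>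
    -(1 / K) * (r ^ (-K) * (1 - Real.exp (-(r * t))) ^ 2) +
      (2 * t / (K * (1 - K))) *
        (r ^ (1 - K) * (Real.exp (-(r * t)) - Real.exp (-(r * t)) ^ 2)) with hGG
  -- integrability of ff
  have hfint : IntegrableOn ff (Ioi 0) volume := stmt_12_aux K t hK1 hK2 ht
  refine ⟨hfint, ?_⟩
  -- integrability of the gamma-type pieces
  have hbase : ∀ b : ℝ, 0 < b →
      IntegrableOn (fun r : ℝ => r ^ (2 - K - 1) * Real.exp (-(b * r))) (Ioi 0) volume := by
    intro b hb
    have := integrableOn_rpow_mul_exp_neg_mul_rpow (s := 2 - K - 1) (p := 1) (by linarith) one_pos hb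
    simp_rw [Real.rpow_one, neg_mul] at this
    exact this
  have hhint : IntegrableOn hh (Ioi 0) volume :=
    ((((hbase _ (by linarith : (0:ℝ) < 2 * t)).const_mul 2).sub (hbase _ ht)).const_mul _)
  have hsub : IntegrableOn (fun r => ff r - hh r) (Ioi 0) volume := hfint.sub hhint
  -- derivative identity
  have hderiv : ∀ x ∈ Ioi (0:ℝ), HasDerivAt GG (ff x - hh x) x := by
    intro x hx
    have hx0 : (0:ℝ) < x := hx
    set E := Real.exp (-(x * t)) with hE
    have hEx : HasDerivAt (fun r : ℝ => Real.exp (-(r * t))) (-t * E) x := by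
      have h1 : HasDerivAt (fun r : ℝ => -(r * t)) (-t) x := by
        simpa using ((hasDerivAt_id x).mul_const t).fun_neg
      have h2 := h1.exp
      convert h2 using 1
      rw [hE]; ring
    have hA : HasDerivAt (fun r : ℝ => 1 - Real.exp (-(r * t))) (t * E) x := by
      have := hEx.const_sub 1
      exact this.congr_deriv (by ring)
    have hA2 : HasDerivAt (fun r : ℝ => (1 - Real.exp (-(r * t))) ^ 2)
        (2 * (1 - E) * (t * E)) x := by
      have := hA.fun_pow 2
      simpa [hE] using this
    have hE2 : HasDerivAt (fun r : ℝ => Real.exp (-(r * t)) ^ 2) (2 * E * (-t * E)) x := by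
      have := hEx.fun_pow 2
      simpa [hE] using this
    have hB : HasDerivAt (fun r : ℝ => Real.exp (-(r * t)) - Real.exp (-(r * t)) ^ 2)
        (-t * E - 2 * E * (-t * E)) x := hEx.sub hE2
    have hP : HasDerivAt (fun r : ℝ => r ^ (-K)) (-K * x ^ (-K - 1)) x :=
      Real.hasDerivAt_rpow_const (Or.inl hx0.ne')
    have hQ : HasDerivAt (fun r : ℝ => r ^ (1 - K)) ((1 - K) * x ^ (1 - K - 1)) x :=
      Real.hasDerivAt_rpow_const (Or.inl hx0.ne')
    have hG := ((hP.mul hA2).const_mul (-(1/K))).add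
      ((hQ.mul hB).const_mul (2 * t / (K * (1 - K))))
    refine hG.congr_deriv ?_
    symm
    have e1 : x ^ (-K - 1) = x ^ (-K) / x := by
      rw [show -K - 1 = -K - (1:ℝ) from rfl, Real.rpow_sub hx0, Real.rpow_one]
    have e2 : x ^ (1 - K - 1) = x ^ (1 - K) / x := by
      rw [Real.rpow_sub hx0, Real.rpow_one]
    have e3 : x ^ (-(1 + K)) = x ^ (-K) / x := by
      rw [show -(1 + K) = -K - 1 by ring, Real.rpow_sub hx0, Real.rpow_one]
    have e4 : x ^ (2 - K - 1) = x ^ (1 - K) := by rw [show (2:ℝ) - K - 1 = 1 - K by ring]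
    have e5 : x ^ (1 - K) = x ^ (-K) * x := by
      rw [show 1 - K = -K + 1 by ring, Real.rpow_add hx0, Real.rpow_one]
    have eE1 : Real.exp (-(t * x)) = E := by rw [hE, mul_comm]
    have eE2 : Real.exp (-((2 * t) * x)) = E ^ 2 := by
      rw [hE, sq, ← Real.exp_add]; ring_nf
    simp only [hff, hhh]
    rw [e1, e2, e3, e4, e5, eE1, eE2]
    have hKne : K ≠ 0 := by linarith
    have hK1ne : 1 - K ≠ 0 := by linarith
    have hK1ne' : K - 1 ≠ 0 := by linarith
    field_simp
    ring
  -- limit of GG at infinity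
  have htop : Tendsto GG atTop (nhds 0) := by
    have hexp : Tendsto (fun r : ℝ => Real.exp (-(r * t))) atTop (nhds 0) :=
      Real.tendsto_exp_atBot.comp (tendsto_neg_atTop_atBot.comp (tendsto_id.atTop_mul_const ht))
    have hA : Tendsto (fun r : ℝ => (1 - Real.exp (-(r * t))) ^ 2) atTop (nhds 1) := by
      have h1 : Tendsto (fun r : ℝ => 1 - Real.exp (-(r * t))) atTop (nhds (1 - 0)) :=
        tendsto_const_nhds.sub hexp
      have := h1.pow 2
      norm_num at this
      exact this
    have hB : Tendsto (fun r : ℝ => Real.exp (-(r * t)) - Real.exp (-(r * t)) ^ 2)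
        atTop (nhds 0) := by
      have := hexp.sub (hexp.pow 2)
      simpa using this
    have hP : Tendsto (fun r : ℝ => r ^ (-K)) atTop (nhds 0) :=
      tendsto_rpow_neg_atTop (by linarith)
    have hQ : Tendsto (fun r : ℝ => r ^ (1 - K)) atTop (nhds 0) := by
      have := tendsto_rpow_neg_atTop (show (0:ℝ) < K - 1 by linarith)
      simp only [show -(K - 1) = 1 - K by ring] at this
      exact this
    have h := ((hP.mul hA).const_mul (-(1/K))).add
      ((hQ.mul hB).const_mul (2 * t / (K * (1 - K))))
    rw [show (0:ℝ) = -(1/K) * (0*1) + (2 * t / (K * (1 - K))) * (0*0) by ring]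
    exact h
  -- limit of GG at 0⁺
  have hzero : Tendsto GG (nhdsWithin 0 (Ioi 0)) (nhds 0) := by
    have hmono : nhdsWithin (0:ℝ) (Ioi 0) ≤ nhdsWithin 0 {(0:ℝ)}ᶜ :=
      nhdsWithin_mono 0 (fun x hx => ne_of_gt hx)
    have d1 : Tendsto (fun r : ℝ => (1 - Real.exp (-(r * t))) / r)
        (nhdsWithin 0 (Ioi 0)) (nhds t) := by
      have hd : HasDerivAt (fun r : ℝ => 1 - Real.exp (-(r * t))) t 0 := by
        have h1 : HasDerivAt (fun r : ℝ => -(r * t)) (-t) 0 := by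
          simpa using ((hasDerivAt_id (0:ℝ)).mul_const t).fun_neg
        have h2 := (h1.exp).const_sub 1
        simpa using h2
      rw [hasDerivAt_iff_tendsto_slope] at hd
      refine (hd.mono_left hmono).congr' ?_
      filter_upwards [self_mem_nhdsWithin] with r hr
      simp [slope_def_field]
    have d2 : Tendsto (fun r : ℝ => (Real.exp (-(r * t)) - Real.exp (-(r * t)) ^ 2) / r)
        (nhdsWithin 0 (Ioi 0)) (nhds t) := by
      have h1 : HasDerivAt (fun r : ℝ => -(r * t)) (-t) 0 := by
        simpa using ((hasDerivAt_id (0:ℝ)).mul_const t).fun_neg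
      have h2 := h1.exp
      have h3 := h2.fun_sub (h2.fun_pow 2)
      have hd : HasDerivAt (fun r : ℝ => Real.exp (-(r * t)) - Real.exp (-(r * t)) ^ 2) t 0 := by
        refine h3.congr_deriv ?_
        symm
        simp; ring
      rw [hasDerivAt_iff_tendsto_slope] at hd
      refine (hd.mono_left hmono).congr' ?_
      filter_upwards [self_mem_nhdsWithin] with r hr
      simp [slope_def_field]
    have hpow : Tendsto (fun r : ℝ => r ^ (2 - K)) (nhdsWithin 0 (Ioi 0)) (nhds 0) := by
      have hc : ContinuousAt (fun r : ℝ => r ^ (2 - K)) 0 :=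
        Real.continuousAt_rpow_const 0 (2 - K) (Or.inr (by linarith))
      have := (hc.continuousWithinAt (s := Ioi 0)).tendsto
      simpa [Real.zero_rpow (show 2 - K ≠ 0 by linarith)] using this
    have hQ : Tendsto (fun r : ℝ =>
        -(1/K) * ((1 - Real.exp (-(r * t))) / r) ^ 2 +
          (2 * t / (K * (1 - K))) * ((Real.exp (-(r * t)) - Real.exp (-(r * t)) ^ 2) / r))
        (nhdsWithin 0 (Ioi 0))
        (nhds (-(1/K) * t ^ 2 + (2 * t / (K * (1 - K))) * t)) :=
      ((d1.pow 2).const_mul _).add (d2.const_mul _)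
    have := hpow.mul hQ
    rw [zero_mul] at this
    refine this.congr' ?_
    filter_upwards [self_mem_nhdsWithin] with r hr
    have hr0 : (0:ℝ) < r := hr
    have e1 : r ^ (2 - K) = r ^ (-K) * (r * r) := by
      rw [show 2 - K = -K + 2 by ring, Real.rpow_add hr0, show (2:ℝ) = ((2:ℕ):ℝ) by norm_num,
        Real.rpow_natCast]
      ring
    have e2 : r ^ (1 - K) = r ^ (-K) * r := by
      rw [show 1 - K = -K + 1 by ring, Real.rpow_add hr0, Real.rpow_one]
    have hKne : K ≠ 0 := by linarith
    have h1K : 1 - K ≠ 0 := by linarith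
    have hrne : r ≠ 0 := hr0.ne'
    simp only [hGG, e1, e2]
    field_simp
  -- ∫ (ff - hh) = 0 by FTC
  have hzero' : ∫ r in Ioi (0:ℝ), (ff r - hh r) = 0 := by
    have := MeasureTheory.integral_Ioi_deriv_mul_eq_sub (a := (0:ℝ))
      (u := GG) (u' := fun x => ff x - hh x)
      (v := fun _ => (1:ℝ)) (v' := fun _ => (0:ℝ))
      hderiv
      (fun x _ => hasDerivAt_const x 1)
      (by simpa [Pi.mul_def, Pi.add_def] using hsub)
      (by simpa [Pi.mul_def] using hzero)
      (by simpa [Pi.mul_def] using htop)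
    simpa using this
  have hsplit : ∫ r in Ioi (0:ℝ), ff r = ∫ r in Ioi (0:ℝ), hh r := by
    have h1 : ∫ r in Ioi (0:ℝ), (ff r - hh r)
        = (∫ r in Ioi (0:ℝ), ff r) - ∫ r in Ioi (0:ℝ), hh r :=
      integral_sub hfint hhint
    rw [h1] at hzero'; linarith
  -- compute ∫ hh
  have hI : ∀ b : ℝ, 0 < b →
      ∫ r in Ioi (0:ℝ), r ^ (2 - K - 1) * Real.exp (-(b * r))
        = (1/b) ^ (2-K) * Real.Gamma (2-K) :=
    fun b hb => Real.integral_rpow_mul_exp_neg_mul_Ioi (by linarith) hb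
  have hval : ∫ r in Ioi (0:ℝ), hh r
      = (Real.Gamma (2 - K) / (K * (K - 1))) * ((2:ℝ) ^ K - 2) * t ^ K := by
    simp only [hhh]
    rw [integral_const_mul, integral_sub (((hbase _ (by linarith)).const_mul 2)) (hbase _ ht),
      integral_const_mul, hI _ (by linarith : (0:ℝ) < 2*t), hI _ ht]
    have h4 : (2:ℝ) ^ (2:ℝ) = 4 := by
      rw [show (2:ℝ) = ((2:ℕ):ℝ) by norm_num, Real.rpow_natCast]; norm_num
    have e1 : ((1:ℝ)/(2*t)) ^ (2-K) = ((2:ℝ)^(2-K))⁻¹ * (t^(2-K))⁻¹ := by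
      rw [show (1:ℝ)/(2*t) = (2:ℝ)⁻¹ * t⁻¹ by field_simp,
        Real.mul_rpow (by norm_num) (by positivity),
        Real.inv_rpow (by norm_num), Real.inv_rpow ht.le]
    have e2 : ((1:ℝ)/t) ^ (2-K) = (t^(2-K))⁻¹ := by
      rw [one_div, Real.inv_rpow ht.le]
    rw [e1, e2]
    have ht2 : t ^ (2-K) * t ^ K = t ^ (2:ℝ) := by
      rw [← Real.rpow_add ht]; norm_num
    have h2K : (2:ℝ) ^ (2-K) * 2 ^ K = 4 := by
      rw [← Real.rpow_add (by norm_num : (0:ℝ) < 2)]; norm_num [h4]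
    have htp : (0:ℝ) < t ^ (2-K) := Real.rpow_pos_of_pos ht _
    have h2p : (0:ℝ) < (2:ℝ) ^ (2-K) := Real.rpow_pos_of_pos (by norm_num) _
    have htr : t ^ (2:ℝ) = t ^ (2:ℕ) := by
      rw [show (2:ℝ) = ((2:ℕ):ℝ) by norm_num, Real.rpow_natCast]
    have hKK : K * (K - 1) ≠ 0 := by
      have : (0:ℝ) < K * (K-1) := by nlinarith
      exact this.ne'
    have hk1 : t ^ K = t ^ (2:ℝ) / t ^ (2-K) := by
      rw [eq_div_iff htp.ne', mul_comm, ht2]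
    have hk2 : (2:ℝ) ^ K = 4 / (2:ℝ) ^ (2-K) := by
      rw [eq_div_iff h2p.ne', mul_comm, h2K]
    rw [hk1, hk2, htr]
    field_simp
    ring
  calc ∫ r in Set.Ioi (0:ℝ), ff r = ∫ r in Ioi (0:ℝ), hh r := hsplit
    _ = _ := hval

theorem stmt_12 (K : ℝ) (hK : K ∈ Set.Ioo (1:ℝ) 2) (t : ℝ) (ht : 0 < t) :
    IntegrableOn (fun r : ℝ => (1 - Real.exp (-(r * t))) ^ 2 * r ^ (-(1 + K)))
      (Set.Ioi 0) volume ∧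
    ∫ r in Set.Ioi (0:ℝ), (1 - Real.exp (-(r * t))) ^ 2 * r ^ (-(1 + K))
      = (Real.Gamma (2 - K) / (K * (K - 1))) * ((2:ℝ) ^ K - 2) * t ^ K :=
  stmt_12_main K hK.1 hK.2 t ht
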